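/- Let ψ : (0,∞) → (0,∞) be continuous, strictly positive, and regularly varying at ∞ with index α > 1 (i.e., ψ(kt)/ψ(t) → k^α as t → ∞ for every k > 0), and let W : [0,∞) → [0,∞) be a nondecreasing function with ∫_0^∞ e^{−λx} W(x) dx = 1/ψ(λ) for all λ > 0. Then hypothesis (H) holds: for every β ∈ (0,1), limsup_{x → 0+} W(βx)/W(x) < 1. -/

import Mathlib

open MeasureTheory Filter Set Topology
open scoped ENNReal
open MeasureTheory Filter Set Topology Real
set_option maxHeartbeats 1000000


-- Step 0: integrability of the Laplace integrand
lemma hh_int (ψ : ℝ → ℝ) (hψpos : ∀ u : ℝ, 0 < u → 0 < ψ u) (W : ℝ → ℝ)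
    (hWlaplace : ∀ lam : ℝ, 0 < lam →
      ∫ x in Set.Ioi (0 : ℝ), Real.exp (-lam * x) * W x = (ψ lam)⁻¹)
    {lam : ℝ} (hlam : 0 < lam) :
    IntegrableOn (fun t => Real.exp (-lam * t) * W t) (Set.Ioi 0) := by
  by_contra h
  have h0 := integral_undef h
  rw [hWlaplace lam hlam] at h0
  exact (inv_pos.mpr (hψpos lam hlam)).ne' h0

-- substitution lemma: value
lemma hh_subst (ψ : ℝ → ℝ) (W : ℝ → ℝ)
    (hWlaplace : ∀ lam : ℝ, 0 < lam →
      ∫ x in Set.Ioi (0 : ℝ), Real.exp (-lam * x) * W x = (ψ lam)⁻¹)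
    {x s : ℝ} (hx : 0 < x) (hs : 0 < s) :
    ∫ t in Set.Ioi (0:ℝ), Real.exp (-(s*t)) * W (x*t) = (x * ψ (s/x))⁻¹ := by
  have h1 : ∀ t : ℝ, Real.exp (-(s*t)) * W (x*t)
      = (fun u => Real.exp (-(s/x) * u) * W u) (x * t) := by
    intro t
    simp only
    have : -(s/x) * (x*t) = -(s*t) := by field_simp
    rw [this]
  calc ∫ t in Set.Ioi (0:ℝ), Real.exp (-(s*t)) * W (x*t)
      = ∫ t in Set.Ioi (0:ℝ), (fun u => Real.exp (-(s/x) * u) * W u) (x * t) := by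
        simp_rw [h1]
    _ = x⁻¹ • ∫ u in Set.Ioi (x*0), Real.exp (-(s/x) * u) * W u :=
        integral_comp_mul_left_Ioi (fun u => Real.exp (-(s/x) * u) * W u) 0 hx
    _ = (x * ψ (s/x))⁻¹ := by
        rw [mul_zero, hWlaplace (s/x) (div_pos hs hx), mul_inv, smul_eq_mul]

-- substitution: integrability
lemma hh_subst_int (ψ : ℝ → ℝ) (hψpos : ∀ u : ℝ, 0 < u → 0 < ψ u) (W : ℝ → ℝ)
    (hWlaplace : ∀ lam : ℝ, 0 < lam →
      ∫ x in Set.Ioi (0 : ℝ), Real.exp (-lam * x) * W x = (ψ lam)⁻¹)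
    {x s : ℝ} (hx : 0 < x) (hs : 0 < s) :
    IntegrableOn (fun t => Real.exp (-(s*t)) * W (x*t)) (Set.Ioi 0) := by
  have h := hh_int ψ hψpos W hWlaplace (div_pos hs hx)
  have h2 := (integrableOn_Ioi_comp_mul_left_iff
      (fun u => Real.exp (-(s/x) * u) * W u) 0 hx).mpr (by simpa using h)
  refine h2.congr_fun (fun t ht => ?_) measurableSet_Ioi
  have : -(s/x) * (x*t) = -(s*t) := by field_simp
  simp only [this]

-- limit of normalized transforms
lemma hh_tendsto_ratio (ψ : ℝ → ℝ) (hψpos : ∀ u : ℝ, 0 < u → 0 < ψ u)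
    (α : ℝ) (hα : 1 < α)
    (hRV : ∀ k : ℝ, 0 < k → Tendsto (fun t => ψ (k * t) / ψ t) atTop (nhds (k ^ α)))
    {s : ℝ} (hs : 0 < s) :
    Tendsto (fun x : ℝ => (x * ψ x⁻¹) * (x * ψ (s/x))⁻¹) (𝓝[>] (0:ℝ))
      (𝓝 (s ^ (-α))) := by
  have h1 : Tendsto (fun x : ℝ => ψ (s * x⁻¹) / ψ x⁻¹) (𝓝[>] (0:ℝ)) (𝓝 (s ^ α)) :=
    (hRV s hs).comp tendsto_inv_nhdsGT_zero
  have hsα : (0:ℝ) < s ^ α := Real.rpow_pos_of_pos hs α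
  have h2 : Tendsto (fun x : ℝ => (ψ (s * x⁻¹) / ψ x⁻¹)⁻¹) (𝓝[>] (0:ℝ))
      (𝓝 ((s ^ α)⁻¹)) := h1.inv₀ hsα.ne'
  rw [← Real.rpow_neg hs.le] at h2
  refine h2.congr' ?_
  filter_upwards [self_mem_nhdsWithin] with x hx
  have hx : (0:ℝ) < x := hx
  have hψ1 : 0 < ψ x⁻¹ := hψpos _ (inv_pos.mpr hx)
  have hψ2 : 0 < ψ (s/x) := hψpos _ (div_pos hs hx)
  rw [div_eq_mul_inv s x] at hψ2 ⊢
  rw [mul_inv, ← mul_assoc, mul_comm x (ψ x⁻¹), mul_assoc, mul_assoc,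
    mul_inv_cancel_left₀ hx.ne', div_eq_mul_inv, mul_comm s x⁻¹,
    mul_comm (ψ (x⁻¹ * s)) (ψ x⁻¹)⁻¹, mul_inv, inv_inv]

-- Gamma integral, scaled: value and integrability
lemma hh_gamma_int (α : ℝ) (hα : 1 < α) {s : ℝ} (hs : 0 < s) :
    IntegrableOn (fun t : ℝ => Real.exp (-(s*t)) * t ^ (α-1)) (Set.Ioi 0) := by
  have h := integrableOn_rpow_mul_exp_neg_mul_rpow (p := 1) (s := α - 1) (b := s)
    (by linarith) one_pos hs
  refine h.congr_fun (fun t ht => ?_) measurableSet_Ioi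
  simp only [Real.rpow_one]
  ring

lemma hh_gamma_val (α : ℝ) (hα : 1 < α) {s : ℝ} (hs : 0 < s) :
    ∫ t in Set.Ioi (0:ℝ), Real.exp (-(s*t)) * t ^ (α-1)
      = Real.Gamma α * s ^ (-α) := by
  have h1 : ∀ t ∈ Set.Ioi (0:ℝ), Real.exp (-(s*t)) * t ^ (α-1)
      = s ^ (1-α) * ((fun u => Real.exp (-u) * u ^ (α-1)) (s * t)) := by
    intro t ht
    have ht : (0:ℝ) < t := ht
    simp only
    rw [Real.mul_rpow hs.le ht.le, show s ^ (1-α) * (Real.exp (-(s*t)) * (s ^ (α-1) * t ^ (α-1)))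
      = (s ^ (1-α) * s ^ (α-1)) * (Real.exp (-(s*t)) * t ^ (α-1)) by ring,
      ← Real.rpow_add hs]
    norm_num
  rw [setIntegral_congr_fun measurableSet_Ioi h1]
  simp_rw [← smul_eq_mul (a := s ^ (1-α))]
  rw [integral_smul, integral_comp_mul_left_Ioi (fun u => Real.exp (-u) * u ^ (α-1)) 0 hs,
    mul_zero, ← Real.Gamma_eq_integral (by linarith : (0:ℝ) < α)]
  rw [smul_eq_mul, smul_eq_mul, ← Real.rpow_neg_one s, ← mul_assoc,
    ← Real.rpow_add hs, mul_comm, show (1:ℝ)-α+-1 = -α by ring]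

noncomputable def hhPhi (b₁ b₂ : ℝ) : ℝ → ℝ :=
  fun v => min 1 (max 0 ((v - Real.exp (-b₂)) / (Real.exp (-b₁) - Real.exp (-b₂))))

lemma hhPhi_nonneg (b₁ b₂ : ℝ) (v : ℝ) : 0 ≤ hhPhi b₁ b₂ v :=
  le_min zero_le_one (le_max_left 0 _)

lemma hhPhi_le_one (b₁ b₂ : ℝ) (v : ℝ) : hhPhi b₁ b₂ v ≤ 1 := min_le_left _ _

lemma hhPhi_denom_pos {b₁ b₂ : ℝ} (h : b₁ < b₂) :
    0 < Real.exp (-b₁) - Real.exp (-b₂) :=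
  sub_pos.mpr (Real.exp_lt_exp.mpr (by linarith))

lemma hhPhi_eq_one {b₁ b₂ : ℝ} (h : b₁ < b₂) {v : ℝ} (hv : Real.exp (-b₁) ≤ v) :
    hhPhi b₁ b₂ v = 1 := by
  have hd := hhPhi_denom_pos h
  have h1 : (1:ℝ) ≤ (v - Real.exp (-b₂)) / (Real.exp (-b₁) - Real.exp (-b₂)) := by
    rw [le_div_iff₀ hd]; linarith
  rw [hhPhi, min_eq_left (le_max_of_le_right h1)]

lemma hhPhi_eq_zero {b₁ b₂ : ℝ} (h : b₁ < b₂) {v : ℝ} (hv : v ≤ Real.exp (-b₂)) :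
    hhPhi b₁ b₂ v = 0 := by
  have hd := hhPhi_denom_pos h
  have h1 : (v - Real.exp (-b₂)) / (Real.exp (-b₁) - Real.exp (-b₂)) ≤ 0 :=
    div_nonpos_of_nonpos_of_nonneg (by linarith) hd.le
  rw [hhPhi, max_eq_left h1, min_eq_right zero_le_one]

lemma hhPhi_continuous {b₁ b₂ : ℝ} (h : b₁ < b₂) : Continuous (hhPhi b₁ b₂) := by
  have hd := hhPhi_denom_pos h
  exact continuous_const.min ((continuous_const.max
    ((continuous_id.sub continuous_const).div_const _)))

-- theta = phi(v)/v, continuous on [0,1]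
lemma hhTheta_continuousOn {b₁ b₂ : ℝ} (h0 : 0 < b₁) (h : b₁ < b₂) :
    ContinuousOn (fun v => hhPhi b₁ b₂ v * v⁻¹) (Set.Icc 0 1) := by
  intro v hv
  rcases lt_or_ge v (Real.exp (-b₂)) with hlt | hge
  · have hmem : {w : ℝ | w < Real.exp (-b₂)} ∈ 𝓝[Set.Icc (0:ℝ) 1] v :=
      nhdsWithin_le_nhds (Filter.Tendsto.eventually_lt_const hlt tendsto_id)
    have heq : (fun w => hhPhi b₁ b₂ w * w⁻¹) =ᶠ[𝓝[Set.Icc (0:ℝ) 1] v] fun _ => 0 := by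
      filter_upwards [hmem] with w hw
      rw [hhPhi_eq_zero h (le_of_lt hw), zero_mul]
    exact (continuousWithinAt_const (b := (0:ℝ))).congr_of_eventuallyEq heq
      (by rw [hhPhi_eq_zero h hlt.le, zero_mul])
  · have hvpos : 0 < v := lt_of_lt_of_le (Real.exp_pos _) hge
    exact (((hhPhi_continuous h).continuousAt).mul
      (continuousAt_inv₀ hvpos.ne')).continuousWithinAt

lemma hhPhi_eq_mul {b₁ b₂ : ℝ} (h0 : 0 < b₁) (h : b₁ < b₂) {v : ℝ} (hv : 0 ≤ v) :
    hhPhi b₁ b₂ v = v * (hhPhi b₁ b₂ v * v⁻¹) := by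
  rcases eq_or_lt_of_le hv with rfl | hvpos
  · rw [hhPhi_eq_zero h (Real.exp_pos _).le, zero_mul]
  · field_simp

-- Weierstrass: polynomial approximation of phi
lemma hhPhi_poly {b₁ b₂ : ℝ} (h0 : 0 < b₁) (h : b₁ < b₂) {ε : ℝ} (hε : 0 < ε) :
    ∃ p : Polynomial ℝ, ∀ v ∈ Set.Icc (0:ℝ) 1,
      |hhPhi b₁ b₂ v - v * p.eval v| ≤ ε * v := by
  obtain ⟨p, hp⟩ := exists_polynomial_near_of_continuousOn 0 1
    (fun v => hhPhi b₁ b₂ v * v⁻¹) (hhTheta_continuousOn h0 h) ε hε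
  refine ⟨p, fun v hv => ?_⟩
  rw [hhPhi_eq_mul h0 h hv.1, show v * (hhPhi b₁ b₂ v * v⁻¹) - v * p.eval v
    = v * ((hhPhi b₁ b₂ v * v⁻¹) - p.eval v) by ring, abs_mul, abs_of_nonneg hv.1,
    mul_comm (ε) v]
  exact mul_le_mul_of_nonneg_left (by rw [← abs_neg]; simpa [neg_sub] using (hp v hv).le) hv.1

lemma hh_core (u : ℝ → ℝ)
    (hu0 : ∀ t ∈ Set.Ioi (0:ℝ), 0 ≤ u t)
    (huint : ∀ s : ℝ, 0 < s → IntegrableOn (fun t => Real.exp (-(s*t)) * u t) (Set.Ioi 0))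
    {b₁ b₂ : ℝ} (h1 : 0 < b₁) (h12 : b₁ < b₂)
    (p : Polynomial ℝ) {ε : ℝ} (hε : 0 < ε)
    (hp : ∀ v ∈ Set.Icc (0:ℝ) 1, |hhPhi b₁ b₂ v - v * p.eval v| ≤ ε * v) :
    ((∫ t in Set.Ioc (0:ℝ) b₁, u t) ≤
      (∑ k ∈ Finset.range (p.natDegree+1),
        p.coeff k * ∫ t in Set.Ioi (0:ℝ), Real.exp (-(((k:ℝ)+1)*t)) * u t)
      + ε * ∫ t in Set.Ioi (0:ℝ), Real.exp (-(1*t)) * u t)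
    ∧ ((∑ k ∈ Finset.range (p.natDegree+1),
        p.coeff k * ∫ t in Set.Ioi (0:ℝ), Real.exp (-(((k:ℝ)+1)*t)) * u t)
      ≤ (∫ t in Set.Ioc (0:ℝ) b₂, u t)
        + ε * ∫ t in Set.Ioi (0:ℝ), Real.exp (-(1*t)) * u t) := by
  have h2 : (0:ℝ) < b₂ := h1.trans h12
  -- measurability of u on Ioi 0
  have hum : AEStronglyMeasurable u (volume.restrict (Set.Ioi 0)) := by
    have h := (huint 1 one_pos).aestronglyMeasurable
    have : u = fun t => Real.exp (1*t) * (Real.exp (-(1*t)) * u t) := by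
      funext t
      rw [← mul_assoc, ← Real.exp_add]
      norm_num
    rw [this]
    exact ((Real.continuous_exp.comp (continuous_const.mul continuous_id)).aestronglyMeasurable).mul h
  -- local integrability
  have hloc : ∀ r : ℝ, 0 < r → IntegrableOn u (Set.Ioc 0 r) := by
    intro r hr
    have hsub : Set.Ioc (0:ℝ) r ⊆ Set.Ioi 0 := Set.Ioc_subset_Ioi_self
    have hint : IntegrableOn (fun t => Real.exp r * (Real.exp (-(1*t)) * u t)) (Set.Ioc 0 r) :=
      ((huint 1 one_pos).mono_set hsub).const_mul _
    refine hint.mono' (hum.mono_set hsub) ?_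
    rw [ae_restrict_iff' measurableSet_Ioc]
    filter_upwards with t ht
    have ht1 : (0:ℝ) < t := ht.1
    have hu : 0 ≤ u t := hu0 t ht1
    rw [Real.norm_eq_abs, abs_of_nonneg hu]
    have h1e : (1:ℝ) ≤ Real.exp r * Real.exp (-(1*t)) := by
      rw [← Real.exp_add]
      exact Real.one_le_exp (by linarith [ht.2])
    calc u t = 1 * u t := (one_mul _).symm
      _ ≤ (Real.exp r * Real.exp (-(1*t))) * u t := mul_le_mul_of_nonneg_right h1e hu
      _ = Real.exp r * (Real.exp (-(1*t)) * u t) := by ring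
  -- polynomial combination as a function
  set n := p.natDegree with hn
  have hPsum : ∀ t : ℝ, Real.exp (-t) * p.eval (Real.exp (-t))
      = ∑ k ∈ Finset.range (n+1), p.coeff k * Real.exp (-(((k:ℝ)+1)*t)) := by
    intro t
    rw [Polynomial.eval_eq_sum_range, Finset.mul_sum]
    refine Finset.sum_congr rfl (fun k _ => ?_)
    rw [← Real.exp_nat_mul, mul_left_comm, ← Real.exp_add]
    congr 2
    ring
  -- integrability of the polynomial part times u
  have hPint : IntegrableOn
      (fun t => (Real.exp (-t) * p.eval (Real.exp (-t))) * u t) (Set.Ioi 0) := by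
    have : (fun t => (Real.exp (-t) * p.eval (Real.exp (-t))) * u t)
        = fun t => ∑ k ∈ Finset.range (n+1),
            p.coeff k * (Real.exp (-(((k:ℝ)+1)*t)) * u t) := by
      funext t
      rw [hPsum t, Finset.sum_mul]
      exact Finset.sum_congr rfl (fun k _ => by ring)
    rw [this]
    exact integrable_finset_sum _ (fun k _ =>
      (huint ((k:ℝ)+1) (add_pos_of_nonneg_of_pos (Nat.cast_nonneg k) one_pos)).const_mul _)
  -- value of the polynomial part integral
  have hPval : ∫ t in Set.Ioi (0:ℝ), (Real.exp (-t) * p.eval (Real.exp (-t))) * u t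
      = ∑ k ∈ Finset.range (n+1),
          p.coeff k * ∫ t in Set.Ioi (0:ℝ), Real.exp (-(((k:ℝ)+1)*t)) * u t := by
    have heq : (fun t => (Real.exp (-t) * p.eval (Real.exp (-t))) * u t)
        = fun t => ∑ k ∈ Finset.range (n+1),
            p.coeff k * (Real.exp (-(((k:ℝ)+1)*t)) * u t) := by
      funext t
      rw [hPsum t, Finset.sum_mul]
      exact Finset.sum_congr rfl (fun k _ => by ring)
    have hintk : ∀ k ∈ Finset.range (n+1), Integrable
        (fun t => p.coeff k * (Real.exp (-(((k:ℝ)+1)*t)) * u t))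
        (volume.restrict (Set.Ioi 0)) := fun k _ =>
      (huint ((k:ℝ)+1) (add_pos_of_nonneg_of_pos (Nat.cast_nonneg k) one_pos)).const_mul _
    rw [heq, integral_finset_sum _ hintk]
    exact Finset.sum_congr rfl (fun k _ => integral_const_mul _ _)
  -- pointwise bounds for t > 0
  have hmem : ∀ t : ℝ, 0 < t → Real.exp (-t) ∈ Set.Icc (0:ℝ) 1 :=
    fun t ht => ⟨(Real.exp_pos _).le, by
      rw [← Real.exp_zero]; exact Real.exp_le_exp.mpr (by linarith)⟩
  have hub : ∀ t : ℝ, 0 < t → hhPhi b₁ b₂ (Real.exp (-t))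
      ≤ Real.exp (-t) * p.eval (Real.exp (-t)) + ε * Real.exp (-(1*t)) := by
    intro t ht
    have := hp _ (hmem t ht)
    have h' := abs_le.mp this
    rw [one_mul]
    linarith [h'.1]
  have hlb : ∀ t : ℝ, 0 < t → Real.exp (-t) * p.eval (Real.exp (-t))
      ≤ hhPhi b₁ b₂ (Real.exp (-t)) + ε * Real.exp (-(1*t)) := by
    intro t ht
    have := hp _ (hmem t ht)
    have h' := abs_le.mp this
    rw [one_mul]
    linarith [h'.2]
  -- integrability of (P + eps E) * u on Ioi 0
  have hRint : IntegrableOn (fun t =>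
      (Real.exp (-t) * p.eval (Real.exp (-t)) + ε * Real.exp (-(1*t))) * u t)
      (Set.Ioi 0) := by
    have : (fun t =>
        (Real.exp (-t) * p.eval (Real.exp (-t)) + ε * Real.exp (-(1*t))) * u t)
        = fun t => (Real.exp (-t) * p.eval (Real.exp (-t))) * u t
            + ε * (Real.exp (-(1*t)) * u t) := by
      funext t; ring
    rw [this]
    exact hPint.add ((huint 1 one_pos).const_mul _)
  -- integrability of phi(exp(-t)) * u
  have hφm : AEStronglyMeasurable (fun t => hhPhi b₁ b₂ (Real.exp (-t)) * u t)
      (volume.restrict (Set.Ioi 0)) :=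
    (((hhPhi_continuous h12).comp (Real.continuous_exp.comp continuous_neg)).aestronglyMeasurable).mul hum
  have hφint : IntegrableOn (fun t => hhPhi b₁ b₂ (Real.exp (-t)) * u t) (Set.Ioi 0) := by
    have hind : Integrable ((Set.Ioc (0:ℝ) b₂).indicator u) (volume.restrict (Set.Ioi 0)) := by
      rw [integrable_indicator_iff measurableSet_Ioc, IntegrableOn,
        Measure.restrict_restrict measurableSet_Ioc,
        Set.inter_eq_left.mpr Set.Ioc_subset_Ioi_self]
      exact hloc b₂ h2
    refine hind.mono' hφm ?_
    rw [ae_restrict_iff' measurableSet_Ioi]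
    filter_upwards with t ht
    have ht : (0:ℝ) < t := ht
    have hu : 0 ≤ u t := hu0 t ht
    rw [Real.norm_eq_abs, abs_of_nonneg (mul_nonneg (hhPhi_nonneg _ _ _) hu)]
    by_cases htb : t ≤ b₂
    · rw [Set.indicator_of_mem (show t ∈ Set.Ioc (0:ℝ) b₂ from ⟨ht, htb⟩)]
      exact mul_le_of_le_one_left hu (hhPhi_le_one _ _ _)
    · push_neg at htb
      have : hhPhi b₁ b₂ (Real.exp (-t)) = 0 :=
        hhPhi_eq_zero h12 (Real.exp_le_exp.mpr (by linarith))
      rw [this, zero_mul, Set.indicator_of_notMem (fun hmem' => (not_le.mpr htb) hmem'.2)]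
  constructor
  · -- upper bound
    calc ∫ t in Set.Ioc (0:ℝ) b₁, u t
        = ∫ t in Set.Ioc (0:ℝ) b₁, hhPhi b₁ b₂ (Real.exp (-t)) * u t := by
          refine setIntegral_congr_fun measurableSet_Ioc (fun t ht => ?_)
          rw [hhPhi_eq_one h12 (Real.exp_le_exp.mpr (by linarith [ht.2])), one_mul]
      _ ≤ ∫ t in Set.Ioc (0:ℝ) b₁,
            (Real.exp (-t) * p.eval (Real.exp (-t)) + ε * Real.exp (-(1*t))) * u t := by
          refine setIntegral_mono_on (hφint.mono_set Set.Ioc_subset_Ioi_self)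
            (hRint.mono_set Set.Ioc_subset_Ioi_self) measurableSet_Ioc (fun t ht => ?_)
          exact mul_le_mul_of_nonneg_right (hub t ht.1) (hu0 t ht.1)
      _ ≤ ∫ t in Set.Ioi (0:ℝ),
            (Real.exp (-t) * p.eval (Real.exp (-t)) + ε * Real.exp (-(1*t))) * u t := by
          refine setIntegral_mono_set hRint ?_
            (HasSubset.Subset.eventuallyLE Set.Ioc_subset_Ioi_self)
          rw [EventuallyLE, ae_restrict_iff' measurableSet_Ioi]
          filter_upwards with t ht
          have ht : (0:ℝ) < t := ht
          exact mul_nonneg (le_trans (hhPhi_nonneg b₁ b₂ _) (hub t ht)) (hu0 t ht)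
      _ = (∑ k ∈ Finset.range (n+1),
            p.coeff k * ∫ t in Set.Ioi (0:ℝ), Real.exp (-(((k:ℝ)+1)*t)) * u t)
          + ε * ∫ t in Set.Ioi (0:ℝ), Real.exp (-(1*t)) * u t := by
          have heq : (fun t =>
              (Real.exp (-t) * p.eval (Real.exp (-t)) + ε * Real.exp (-(1*t))) * u t)
              = fun t => (Real.exp (-t) * p.eval (Real.exp (-t))) * u t
                  + ε * (Real.exp (-(1*t)) * u t) := by
            funext t; ring
          rw [heq, integral_add hPint ((huint 1 one_pos).const_mul _), hPval,
            integral_const_mul]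
  · -- lower bound
    have hsplit : ∫ t in Set.Ioi (0:ℝ), hhPhi b₁ b₂ (Real.exp (-t)) * u t
        = ∫ t in Set.Ioc (0:ℝ) b₂, hhPhi b₁ b₂ (Real.exp (-t)) * u t := by
      rw [← Set.Ioc_union_Ioi_eq_Ioi h2.le,
        setIntegral_union (Set.Ioc_disjoint_Ioi le_rfl) measurableSet_Ioi
          (hφint.mono_set (by rw [← Set.Ioc_union_Ioi_eq_Ioi h2.le]; exact Set.subset_union_left))
          (hφint.mono_set (by rw [← Set.Ioc_union_Ioi_eq_Ioi h2.le]; exact Set.subset_union_right))]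
      have : ∫ t in Set.Ioi b₂, hhPhi b₁ b₂ (Real.exp (-t)) * u t = 0 := by
        rw [setIntegral_congr_fun measurableSet_Ioi (g := fun _ => (0:ℝ))
          (fun t ht => by
            rw [hhPhi_eq_zero h12 (Real.exp_le_exp.mpr (by linarith [Set.mem_Ioi.mp ht])), zero_mul]),
          integral_zero]
      rw [this, add_zero]
    calc (∑ k ∈ Finset.range (n+1),
            p.coeff k * ∫ t in Set.Ioi (0:ℝ), Real.exp (-(((k:ℝ)+1)*t)) * u t)
        = ∫ t in Set.Ioi (0:ℝ), (Real.exp (-t) * p.eval (Real.exp (-t))) * u t := hPval.symm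
      _ ≤ ∫ t in Set.Ioi (0:ℝ),
            (hhPhi b₁ b₂ (Real.exp (-t)) + ε * Real.exp (-(1*t))) * u t := by
          refine setIntegral_mono_on hPint ?_ measurableSet_Ioi (fun t ht => ?_)
          · have : (fun t =>
                (hhPhi b₁ b₂ (Real.exp (-t)) + ε * Real.exp (-(1*t))) * u t)
                = fun t => hhPhi b₁ b₂ (Real.exp (-t)) * u t
                    + ε * (Real.exp (-(1*t)) * u t) := by
              funext t; ring
            rw [this]
            exact hφint.add ((huint 1 one_pos).const_mul _)
          · exact mul_le_mul_of_nonneg_right (hlb t ht) (hu0 t ht)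
      _ = (∫ t in Set.Ioc (0:ℝ) b₂, hhPhi b₁ b₂ (Real.exp (-t)) * u t)
          + ε * ∫ t in Set.Ioi (0:ℝ), Real.exp (-(1*t)) * u t := by
          have heq : (fun t =>
              (hhPhi b₁ b₂ (Real.exp (-t)) + ε * Real.exp (-(1*t))) * u t)
              = fun t => hhPhi b₁ b₂ (Real.exp (-t)) * u t
                  + ε * (Real.exp (-(1*t)) * u t) := by
            funext t; ring
          rw [heq, integral_add hφint ((huint 1 one_pos).const_mul _), hsplit,
            integral_const_mul]
      _ ≤ (∫ t in Set.Ioc (0:ℝ) b₂, u t)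
          + ε * ∫ t in Set.Ioi (0:ℝ), Real.exp (-(1*t)) * u t := by
          refine add_le_add_left ?_ _
          refine setIntegral_mono_on (hφint.mono_set Set.Ioc_subset_Ioi_self)
            (hloc b₂ h2) measurableSet_Ioc (fun t ht => ?_)
          exact mul_le_of_le_one_left (hu0 t ht.1) (hhPhi_le_one _ _ _)

lemma hh_rpow_Ioc (α : ℝ) (hα : 1 < α) {r : ℝ} (hr : 0 < r) :
    ∫ t in Set.Ioc (0:ℝ) r, t ^ (α-1) = r ^ α / α := by
  rw [← intervalIntegral.integral_of_le hr.le,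
    integral_rpow (Or.inl (by linarith : (-1:ℝ) < α - 1))]
  rw [Real.zero_rpow (by linarith : α - 1 + 1 ≠ 0), show α - 1 + 1 = α by ring, sub_zero]

lemma hh_approx (ψ : ℝ → ℝ) (hψpos : ∀ u : ℝ, 0 < u → 0 < ψ u)
    (α : ℝ) (hα : 1 < α)
    (hRV : ∀ k : ℝ, 0 < k → Tendsto (fun t => ψ (k * t) / ψ t) atTop (nhds (k ^ α)))
    (W : ℝ → ℝ) (hWnonneg : ∀ x : ℝ, 0 ≤ x → 0 ≤ W x)
    (hWlaplace : ∀ lam : ℝ, 0 < lam →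
      ∫ x in Set.Ioi (0 : ℝ), Real.exp (-lam * x) * W x = (ψ lam)⁻¹)
    {b₁ b₂ : ℝ} (h1 : 0 < b₁) (h12 : b₁ < b₂) {ε : ℝ} (hε : 0 < ε) :
    ∃ T : ℝ, ∃ S E : ℝ → ℝ,
      b₁ ^ α / (α * Real.Gamma α) ≤ T + ε ∧
      T ≤ b₂ ^ α / (α * Real.Gamma α) + ε ∧
      Tendsto S (𝓝[>] (0:ℝ)) (𝓝 T) ∧ Tendsto E (𝓝[>] (0:ℝ)) (𝓝 1) ∧
      (∀ x : ℝ, 0 < x →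
        ((x * ψ x⁻¹) * ∫ t in Set.Ioc (0:ℝ) b₁, W (x*t)) ≤ S x + ε * E x ∧
        S x - ε * E x ≤ ((x * ψ x⁻¹) * ∫ t in Set.Ioc (0:ℝ) b₂, W (x*t))) := by
  have hα0 : (0:ℝ) < α := by linarith
  have hG : 0 < Real.Gamma α := Real.Gamma_pos_of_pos hα0
  have hαG : 0 < α * Real.Gamma α := mul_pos hα0 hG
  obtain ⟨p, hp⟩ := hhPhi_poly h1 h12 hε
  set n := p.natDegree with hn
  refine ⟨∑ k ∈ Finset.range (n+1), p.coeff k * ((k:ℝ)+1) ^ (-α),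
    fun x => ∑ k ∈ Finset.range (n+1),
      p.coeff k * ((x * ψ x⁻¹) * (x * ψ (((k:ℝ)+1)/x))⁻¹),
    fun x => (x * ψ x⁻¹) * (x * ψ (1/x))⁻¹, ?_, ?_, ?_, ?_, ?_⟩
  · -- lower numeric bound via Gamma integrals
    have hcore := (hh_core (fun t : ℝ => t ^ (α-1))
      (fun t ht => Real.rpow_nonneg (le_of_lt ht) _)
      (fun s hs => hh_gamma_int α hα hs) h1 h12 p hε hp).1
    rw [hh_rpow_Ioc α hα h1] at hcore
    have hgv1 : ∫ t in Set.Ioi (0:ℝ), Real.exp (-(1*t)) * t ^ (α-1) = Real.Gamma α := by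
      have := hh_gamma_val α hα one_pos
      rwa [Real.one_rpow, mul_one] at this
    have hsum : (∑ k ∈ Finset.range (n+1),
        p.coeff k * ∫ t in Set.Ioi (0:ℝ), Real.exp (-(((k:ℝ)+1)*t)) * t ^ (α-1))
        = Real.Gamma α * ∑ k ∈ Finset.range (n+1), p.coeff k * ((k:ℝ)+1) ^ (-α) := by
      rw [Finset.mul_sum]
      refine Finset.sum_congr rfl (fun k _ => ?_)
      rw [hh_gamma_val α hα (add_pos_of_nonneg_of_pos (Nat.cast_nonneg k) one_pos)]
      ring
    rw [hgv1, hsum] at hcore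
    set T := ∑ k ∈ Finset.range (n+1), p.coeff k * ((k:ℝ)+1) ^ (-α)
    rw [div_le_iff₀ hαG]
    have h' := (div_le_iff₀ hα0).mp hcore
    calc b₁ ^ α ≤ (Real.Gamma α * T + ε * Real.Gamma α) * α := h'
      _ = (T + ε) * (α * Real.Gamma α) := by ring
  · -- upper numeric bound
    have hcore := (hh_core (fun t : ℝ => t ^ (α-1))
      (fun t ht => Real.rpow_nonneg (le_of_lt ht) _)
      (fun s hs => hh_gamma_int α hα hs) h1 h12 p hε hp).2
    rw [hh_rpow_Ioc α hα (h1.trans h12)] at hcore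
    have hgv1 : ∫ t in Set.Ioi (0:ℝ), Real.exp (-(1*t)) * t ^ (α-1) = Real.Gamma α := by
      have := hh_gamma_val α hα one_pos
      rwa [Real.one_rpow, mul_one] at this
    have hsum : (∑ k ∈ Finset.range (n+1),
        p.coeff k * ∫ t in Set.Ioi (0:ℝ), Real.exp (-(((k:ℝ)+1)*t)) * t ^ (α-1))
        = Real.Gamma α * ∑ k ∈ Finset.range (n+1), p.coeff k * ((k:ℝ)+1) ^ (-α) := by
      rw [Finset.mul_sum]
      refine Finset.sum_congr rfl (fun k _ => ?_)
      rw [hh_gamma_val α hα (add_pos_of_nonneg_of_pos (Nat.cast_nonneg k) one_pos)]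
      ring
    rw [hgv1, hsum] at hcore
    set T := ∑ k ∈ Finset.range (n+1), p.coeff k * ((k:ℝ)+1) ^ (-α)
    have key : T * Real.Gamma α ≤ (b₂ ^ α / (α * Real.Gamma α) + ε) * Real.Gamma α := by
      have heq : (b₂ ^ α / (α * Real.Gamma α) + ε) * Real.Gamma α
          = b₂ ^ α / α + ε * Real.Gamma α := by
        field_simp
      rw [heq]
      linarith [hcore]
    exact le_of_mul_le_mul_right key hG
  · -- tendsto of S
    exact tendsto_finset_sum _ (fun k _ =>
      (hh_tendsto_ratio ψ hψpos α hα hRV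
        (add_pos_of_nonneg_of_pos (Nat.cast_nonneg k) one_pos)).const_mul _)
  · -- tendsto of E
    have h := hh_tendsto_ratio ψ hψpos α hα hRV one_pos
    rw [Real.one_rpow] at h
    simpa [one_div] using h
  · -- eventual inequalities
    intro x hx
    have hIs : ∀ k : ℕ, ∫ t in Set.Ioi (0:ℝ), Real.exp (-(((k:ℝ)+1)*t)) * W (x*t)
        = (x * ψ (((k:ℝ)+1)/x))⁻¹ :=
      fun k => hh_subst ψ W hWlaplace hx (add_pos_of_nonneg_of_pos (Nat.cast_nonneg k) one_pos)
    have hI1 : ∫ t in Set.Ioi (0:ℝ), Real.exp (-(1*t)) * W (x*t) = (x * ψ (1/x))⁻¹ := by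
      have h := hh_subst ψ W hWlaplace hx one_pos
      rwa [show (1:ℝ)/x = 1/x from rfl] at h
    have hnx : 0 ≤ x * ψ x⁻¹ := (mul_pos hx (hψpos _ (inv_pos.mpr hx))).le
    have hcore := hh_core (fun t => W (x*t))
      (fun t ht => hWnonneg _ (mul_nonneg hx.le (le_of_lt ht)))
      (fun s hs => hh_subst_int ψ hψpos W hWlaplace hx hs) h1 h12 p hε hp
    have hsumW : (∑ k ∈ Finset.range (n+1),
        p.coeff k * ∫ t in Set.Ioi (0:ℝ), Real.exp (-(((k:ℝ)+1)*t)) * W (x*t))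
        = ∑ k ∈ Finset.range (n+1), p.coeff k * (x * ψ (((k:ℝ)+1)/x))⁻¹ :=
      Finset.sum_congr rfl (fun k _ => by rw [hIs k])
    obtain ⟨hc1, hc2⟩ := hcore
    rw [hsumW, hI1] at hc1 hc2
    constructor
    · calc (x * ψ x⁻¹) * ∫ t in Set.Ioc (0:ℝ) b₁, W (x*t)
          ≤ (x * ψ x⁻¹) * ((∑ k ∈ Finset.range (n+1),
              p.coeff k * (x * ψ (((k:ℝ)+1)/x))⁻¹) + ε * (x * ψ (1/x))⁻¹) :=
            mul_le_mul_of_nonneg_left hc1 hnx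
        _ = (∑ k ∈ Finset.range (n+1),
              p.coeff k * ((x * ψ x⁻¹) * (x * ψ (((k:ℝ)+1)/x))⁻¹))
            + ε * ((x * ψ x⁻¹) * (x * ψ (1/x))⁻¹) := by
            rw [mul_add, Finset.mul_sum]
            congr 1
            · exact Finset.sum_congr rfl (fun k _ => by ring)
            · ring
    · calc (∑ k ∈ Finset.range (n+1),
              p.coeff k * ((x * ψ x⁻¹) * (x * ψ (((k:ℝ)+1)/x))⁻¹))
            - ε * ((x * ψ x⁻¹) * (x * ψ (1/x))⁻¹)
          = (x * ψ x⁻¹) * ((∑ k ∈ Finset.range (n+1),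
              p.coeff k * (x * ψ (((k:ℝ)+1)/x))⁻¹) - ε * (x * ψ (1/x))⁻¹) := by
            rw [mul_sub, Finset.mul_sum]
            congr 1
            · exact Finset.sum_congr rfl (fun k _ => by ring)
            · ring
        _ ≤ (x * ψ x⁻¹) * ∫ t in Set.Ioc (0:ℝ) b₂, W (x*t) := by
            refine mul_le_mul_of_nonneg_left ?_ hnx
            linarith [hc2]

lemma hh_main_limit (ψ : ℝ → ℝ) (hψpos : ∀ u : ℝ, 0 < u → 0 < ψ u)
    (α : ℝ) (hα : 1 < α)
    (hRV : ∀ k : ℝ, 0 < k → Tendsto (fun t => ψ (k * t) / ψ t) atTop (nhds (k ^ α)))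
    (W : ℝ → ℝ) (hWnonneg : ∀ x : ℝ, 0 ≤ x → 0 ≤ W x)
    (hWlaplace : ∀ lam : ℝ, 0 < lam →
      ∫ x in Set.Ioi (0 : ℝ), Real.exp (-lam * x) * W x = (ψ lam)⁻¹)
    {b : ℝ} (hb : 0 < b) :
    Tendsto (fun x : ℝ => (x * ψ x⁻¹) * ∫ t in Set.Ioc (0:ℝ) b, W (x*t))
      (𝓝[>] (0:ℝ)) (𝓝 (b ^ α / (α * Real.Gamma α))) := by
  have hα0 : (0:ℝ) < α := by linarith
  have hG : 0 < Real.Gamma α := Real.Gamma_pos_of_pos hα0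
  have hαG : 0 < α * Real.Gamma α := mul_pos hα0 hG
  have hBct : ∀ r : ℝ, 0 < r → ContinuousAt (fun s : ℝ => s ^ α / (α * Real.Gamma α)) r :=
    fun r hr => ((Real.continuousAt_rpow_const r α (Or.inl hr.ne')).div_const _)
  rw [tendsto_order]
  constructor
  · -- a < B b  ⇒ eventually a < value
    intro a ha
    have hBb : Tendsto (fun s : ℝ => s ^ α / (α * Real.Gamma α)) (𝓝[<] b)
        (𝓝 (b ^ α / (α * Real.Gamma α))) := (hBct b hb).tendsto.mono_left nhdsWithin_le_nhds
    have hev : ∀ᶠ r in 𝓝[<] b, a < r ^ α / (α * Real.Gamma α) ∧ 0 < r :=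
      (hBb.eventually (eventually_gt_nhds ha)).and
        (Filter.Eventually.filter_mono nhdsWithin_le_nhds (eventually_gt_nhds hb))
    obtain ⟨c, ⟨hca, hc0⟩, hcb⟩ := (hev.and self_mem_nhdsWithin).exists
    have hcb : c < b := hcb
    have hε : 0 < (c ^ α / (α * Real.Gamma α) - a) / 3 := by linarith
    obtain ⟨T, S, E, hT1, _, hS, hE, hbound⟩ :=
      hh_approx ψ hψpos α hα hRV W hWnonneg hWlaplace hc0 hcb hε
    set ε := (c ^ α / (α * Real.Gamma α) - a) / 3
    have hlim : Tendsto (fun x => S x - ε * E x) (𝓝[>] (0:ℝ)) (𝓝 (T - ε * 1)) :=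
      hS.sub ((hE.const_mul ε))
    have hTa : a < T - ε * 1 := by
      have : c ^ α / (α * Real.Gamma α) = a + 3 * ε := by
        simp only [ε]
        ring
      rw [this] at hT1
      linarith
    filter_upwards [self_mem_nhdsWithin, hlim.eventually (eventually_gt_nhds hTa)]
      with x hx hgt
    exact lt_of_lt_of_le hgt ((hbound x hx).2)
  · -- B b < a ⇒ eventually value < a
    intro a ha
    have hBb : Tendsto (fun s : ℝ => s ^ α / (α * Real.Gamma α)) (𝓝[>] b)
        (𝓝 (b ^ α / (α * Real.Gamma α))) := (hBct b hb).tendsto.mono_left nhdsWithin_le_nhds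
    have hev : ∀ᶠ r in 𝓝[>] b, r ^ α / (α * Real.Gamma α) < a :=
      hBb.eventually (eventually_lt_nhds ha)
    obtain ⟨c, hca, hcb⟩ := (hev.and self_mem_nhdsWithin).exists
    have hcb : b < c := hcb
    have hε : 0 < (a - c ^ α / (α * Real.Gamma α)) / 3 := by linarith
    obtain ⟨T, S, E, _, hT2, hS, hE, hbound⟩ :=
      hh_approx ψ hψpos α hα hRV W hWnonneg hWlaplace hb hcb hε
    set ε := (a - c ^ α / (α * Real.Gamma α)) / 3
    have hlim : Tendsto (fun x => S x + ε * E x) (𝓝[>] (0:ℝ)) (𝓝 (T + ε * 1)) :=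
      hS.add ((hE.const_mul ε))
    have hTa : T + ε * 1 < a := by
      have : a = c ^ α / (α * Real.Gamma α) + 3 * ε := by
        simp only [ε]
        ring
      rw [this]
      linarith
    filter_upwards [self_mem_nhdsWithin, hlim.eventually (eventually_lt_nhds hTa)]
      with x hx hlt
    exact lt_of_le_of_lt ((hbound x hx).1) hlt

lemma hh_gamma_choice (α : ℝ) (hα : 1 < α) {β : ℝ} (hβ0 : 0 < β) (hβ1 : β < 1) :
    ∃ γ : ℝ, β < γ ∧ γ < 1 ∧ (γ ^ α - β ^ α) * (1 - γ) < (γ - β) * (1 - γ ^ α) := by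
  have hBern : 1 - β ^ α < α * (1 - β) := by
    have h := one_add_mul_self_lt_rpow_one_add (s := β - 1) (by linarith) (by linarith) hα
    rw [show (1:ℝ) + (β - 1) = β by ring] at h
    nlinarith
  -- slope limit
  have hderiv : HasDerivAt (fun γ : ℝ => γ ^ α) (α * (1:ℝ) ^ (α - 1)) 1 :=
    Real.hasDerivAt_rpow_const (Or.inl one_ne_zero)
  rw [Real.one_rpow, mul_one] at hderiv
  have hslope : Tendsto (fun γ : ℝ => (γ ^ α - 1 ^ α) / (γ - 1)) (𝓝[<] (1:ℝ)) (𝓝 α) := by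
    have h := hasDerivAt_iff_tendsto_slope.mp hderiv
    have hmono : 𝓝[<] (1:ℝ) ≤ 𝓝[≠] (1:ℝ) :=
      nhdsWithin_mono _ (fun x hx => ne_of_lt hx)
    have hsl : slope (fun γ : ℝ => γ ^ α) 1 = fun γ => (γ ^ α - 1 ^ α) / (γ - 1) := by
      funext γ
      rw [slope_def_field, Real.one_rpow]
    exact hsl ▸ (h.mono_left hmono)
  have hcont : Tendsto (fun γ : ℝ => γ ^ α) (𝓝[<] (1:ℝ)) (𝓝 (1 ^ α)) :=
    ((Real.continuousAt_rpow_const 1 α (Or.inl one_ne_zero)).tendsto).mono_left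
      nhdsWithin_le_nhds
  rw [Real.one_rpow] at hcont
  -- F γ := (γ - β) * ((γ^α - 1^α)/(γ - 1)) - (γ^α - β^α) tends to (1-β)*α - (1-β^α) > 0
  have hF : Tendsto (fun γ : ℝ => (γ - β) * ((γ ^ α - 1 ^ α) / (γ - 1)) - (γ ^ α - β ^ α))
      (𝓝[<] (1:ℝ)) (𝓝 ((1 - β) * α - (1 - β ^ α))) := by
    have h1 : Tendsto (fun γ : ℝ => γ - β) (𝓝[<] (1:ℝ)) (𝓝 (1 - β)) :=
      (tendsto_id.sub tendsto_const_nhds).mono_left nhdsWithin_le_nhds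
    exact (h1.mul hslope).sub (hcont.sub tendsto_const_nhds)
  have hpos : (0:ℝ) < (1 - β) * α - (1 - β ^ α) := by nlinarith
  have hev : ∀ᶠ γ in 𝓝[<] (1:ℝ),
      0 < (γ - β) * ((γ ^ α - 1 ^ α) / (γ - 1)) - (γ ^ α - β ^ α) :=
    hF.eventually (eventually_gt_nhds hpos)
  have hev2 : ∀ᶠ γ in 𝓝[<] (1:ℝ), β < γ :=
    Filter.Eventually.filter_mono nhdsWithin_le_nhds (eventually_gt_nhds hβ1)
  obtain ⟨γ, ⟨h1, h2⟩, h3⟩ := ((hev.and hev2).and self_mem_nhdsWithin).exists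
  have h3 : γ < 1 := h3
  refine ⟨γ, h2, h3, ?_⟩
  rw [Real.one_rpow] at h1
  have hne : γ - 1 ≠ 0 := by linarith
  have key : (γ - β) * ((γ ^ α - 1) / (γ - 1)) > γ ^ α - β ^ α := by linarith
  have heq : (γ - β) * ((γ ^ α - 1) / (γ - 1)) = ((γ - β) * (1 - γ ^ α)) / (1 - γ) := by
    rw [show (γ ^ α - 1) / (γ - 1) = (1 - γ ^ α) / (1 - γ) by
      rw [← neg_div_neg_eq]; ring_nf, mul_div_assoc]
  rw [heq] at key
  have := (lt_div_iff₀ (by linarith : (0:ℝ) < 1 - γ)).mp key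
  linarith

lemma hh_loc (u : ℝ → ℝ) (hu0 : ∀ t ∈ Set.Ioi (0:ℝ), 0 ≤ u t)
    (huint : IntegrableOn (fun t => Real.exp (-(1*t)) * u t) (Set.Ioi 0))
    {r : ℝ} (hr : 0 < r) : IntegrableOn u (Set.Ioc 0 r) := by
  have hum : AEStronglyMeasurable u (volume.restrict (Set.Ioi 0)) := by
    have h := huint.aestronglyMeasurable
    have heq : u = fun t => Real.exp (1*t) * (Real.exp (-(1*t)) * u t) := by
      funext t
      rw [← mul_assoc, ← Real.exp_add]
      norm_num
    rw [heq]
    exact ((Real.continuous_exp.comp (continuous_const.mul continuous_id)).aestronglyMeasurable).mul h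
  have hsub : Set.Ioc (0:ℝ) r ⊆ Set.Ioi 0 := Set.Ioc_subset_Ioi_self
  have hint : IntegrableOn (fun t => Real.exp r * (Real.exp (-(1*t)) * u t)) (Set.Ioc 0 r) :=
    (huint.mono_set hsub).const_mul _
  refine hint.mono' (hum.mono_set hsub) ?_
  rw [ae_restrict_iff' measurableSet_Ioc]
  filter_upwards with t ht
  have ht1 : (0:ℝ) < t := ht.1
  have hu : 0 ≤ u t := hu0 t ht1
  rw [Real.norm_eq_abs, abs_of_nonneg hu]
  have h1e : (1:ℝ) ≤ Real.exp r * Real.exp (-(1*t)) := by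
    rw [← Real.exp_add]
    exact Real.one_le_exp (by linarith [ht.2])
  calc u t = 1 * u t := (one_mul _).symm
    _ ≤ (Real.exp r * Real.exp (-(1*t))) * u t := mul_le_mul_of_nonneg_right h1e hu
    _ = Real.exp r * (Real.exp (-(1*t)) * u t) := by ring

theorem hypothesis_H_holds
    (ψ : ℝ → ℝ) (hψpos : ∀ u : ℝ, 0 < u → 0 < ψ u)
    (hψcont : ContinuousOn ψ (Set.Ioi 0))
    (α : ℝ) (hα : 1 < α)
    (hRV : ∀ k : ℝ, 0 < k → Tendsto (fun t => ψ (k * t) / ψ t) atTop (nhds (k ^ α)))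
    (W : ℝ → ℝ) (hWnonneg : ∀ x : ℝ, 0 ≤ x → 0 ≤ W x)
    (hWmono : MonotoneOn W (Set.Ici 0))
    (hWlaplace : ∀ lam : ℝ, 0 < lam →
      ∫ x in Set.Ioi (0 : ℝ), Real.exp (-lam * x) * W x = (ψ lam)⁻¹) :
    ∀ β : ℝ, 0 < β → β < 1 →
      Filter.limsup (fun x => W (β * x) / W x) (𝓝[>] (0 : ℝ)) < 1 := by
  intro β hβ0 hβ1
  have hnonneg_ev : ∀ᶠ x in 𝓝[>] (0:ℝ), 0 ≤ W (β * x) / W x := by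
    filter_upwards [self_mem_nhdsWithin] with x hx
    have hx : (0:ℝ) < x := hx
    exact div_nonneg (hWnonneg _ (by positivity)) (hWnonneg _ hx.le)
  have hcb : IsCoboundedUnder (· ≤ ·) (𝓝[>] (0:ℝ)) (fun x => W (β * x) / W x) :=
    IsCoboundedUnder.of_frequently_ge hnonneg_ev.frequently
  by_cases hWpos : ∀ y : ℝ, 0 < y → 0 < W y
  swap
  · -- W vanishes near 0 : ratio is eventually 0
    push_neg at hWpos
    obtain ⟨y, hy0, hWy⟩ := hWpos
    have hWy0 : W y = 0 := le_antisymm hWy (hWnonneg y hy0.le)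
    have hev : ∀ᶠ x in 𝓝[>] (0:ℝ), W (β * x) / W x ≤ 0 := by
      filter_upwards [Ioo_mem_nhdsGT_of_mem (Set.mem_Ico.mpr ⟨le_rfl, hy0⟩)] with x hx
      have hx0 : (0:ℝ) < x := hx.1
      have h2 : W (β * x) = 0 := le_antisymm
        (hWy0 ▸ hWmono (by positivity : (0:ℝ) ≤ β * x) hy0.le
          (by nlinarith [hx.2] : β * x ≤ y)) (hWnonneg _ (by positivity))
      rw [h2, zero_div]
    exact lt_of_le_of_lt (limsup_le_of_le hcb hev) one_pos
  · -- main case: W > 0 on (0,∞)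
    obtain ⟨γ, hβγ, hγ1, hkey⟩ := hh_gamma_choice α hα hβ0 hβ1
    have hγ0 : (0:ℝ) < γ := hβ0.trans hβγ
    have hα0 : (0:ℝ) < α := by linarith
    have hG : 0 < Real.Gamma α := Real.Gamma_pos_of_pos hα0
    have hαG : 0 < α * Real.Gamma α := mul_pos hα0 hG
    have hγβ0 : (0:ℝ) < γ - β := by linarith
    have h1γ0 : (0:ℝ) < 1 - γ := by linarith
    have hL : ∀ r : ℝ, 0 < r →
        Tendsto (fun x : ℝ => (x * ψ x⁻¹) * ∫ t in Set.Ioc (0:ℝ) r, W (x*t))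
          (𝓝[>] (0:ℝ)) (𝓝 (r ^ α / (α * Real.Gamma α))) :=
      fun r hr => hh_main_limit ψ hψpos α hα hRV W hWnonneg hWlaplace hr
    have hγα1 : γ ^ α < 1 := by
      have := Real.rpow_lt_one hγ0.le hγ1 hα0
      simpa using this
    have hβγα : β ^ α < γ ^ α := Real.rpow_lt_rpow hβ0.le hβγ hα0
    set R : ℝ := ((1 - γ) / (γ - β)) *
      ((γ ^ α / (α * Real.Gamma α) - β ^ α / (α * Real.Gamma α)) /
       (1 / (α * Real.Gamma α) - γ ^ α / (α * Real.Gamma α))) with hRdef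
    have hgR : Tendsto (fun x : ℝ => ((1 - γ) / (γ - β)) *
        (((∫ t in Set.Ioc (0:ℝ) γ, W (x*t)) - ∫ t in Set.Ioc (0:ℝ) β, W (x*t)) /
         ((∫ t in Set.Ioc (0:ℝ) 1, W (x*t)) - ∫ t in Set.Ioc (0:ℝ) γ, W (x*t))))
        (𝓝[>] (0:ℝ)) (𝓝 R) := by
      have hnum : Tendsto (fun x : ℝ =>
          ((x * ψ x⁻¹) * ∫ t in Set.Ioc (0:ℝ) γ, W (x*t))
          - (x * ψ x⁻¹) * ∫ t in Set.Ioc (0:ℝ) β, W (x*t)) (𝓝[>] (0:ℝ))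
          (𝓝 (γ ^ α / (α * Real.Gamma α) - β ^ α / (α * Real.Gamma α))) :=
        (hL γ hγ0).sub (hL β hβ0)
      have hden : Tendsto (fun x : ℝ =>
          ((x * ψ x⁻¹) * ∫ t in Set.Ioc (0:ℝ) 1, W (x*t))
          - (x * ψ x⁻¹) * ∫ t in Set.Ioc (0:ℝ) γ, W (x*t)) (𝓝[>] (0:ℝ))
          (𝓝 (1 / (α * Real.Gamma α) - γ ^ α / (α * Real.Gamma α))) := by
        have h1 := hL 1 one_pos
        rw [Real.one_rpow] at h1
        have h2 := h1.sub (hL γ hγ0)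
        simpa [one_div] using h2
      have hDne : 1 / (α * Real.Gamma α) - γ ^ α / (α * Real.Gamma α) ≠ 0 := by
        rw [div_sub_div_same]
        exact (div_pos (by linarith) hαG).ne'
      have hT := ((hnum.div hden hDne).const_mul ((1 - γ) / (γ - β)))
      refine hT.congr' ?_
      filter_upwards [self_mem_nhdsWithin] with x hx
      have hx : (0:ℝ) < x := hx
      have hnx : x * ψ x⁻¹ ≠ 0 := (mul_pos hx (hψpos _ (inv_pos.mpr hx))).ne'
      simp only [Pi.div_apply]
      rw [← mul_sub, ← mul_sub, mul_div_mul_left _ _ hnx]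
    have hR1 : R < 1 := by
      have hre : R = ((1 - γ) * (γ ^ α - β ^ α)) / ((γ - β) * (1 - γ ^ α)) := by
        rw [hRdef]
        rw [div_sub_div_same, div_sub_div_same, div_div_div_cancel_right₀]
        case hc => exact hαG.ne'
        exact div_mul_div_comm _ _ _ _
      rw [hre, div_lt_one (by nlinarith)]
      nlinarith
    -- pointwise comparison
    have hptw : ∀ᶠ x in 𝓝[>] (0:ℝ), W (β * x) / W x ≤ ((1 - γ) / (γ - β)) *
        (((∫ t in Set.Ioc (0:ℝ) γ, W (x*t)) - ∫ t in Set.Ioc (0:ℝ) β, W (x*t)) /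
         ((∫ t in Set.Ioc (0:ℝ) 1, W (x*t)) - ∫ t in Set.Ioc (0:ℝ) γ, W (x*t))) := by
      filter_upwards [self_mem_nhdsWithin] with x hx
      have hx : (0:ℝ) < x := hx
      have hloc1 : IntegrableOn (fun t => W (x*t)) (Set.Ioc 0 1) :=
        hh_loc _ (fun t ht => hWnonneg _ (mul_nonneg hx.le (le_of_lt ht)))
          (hh_subst_int ψ hψpos W hWlaplace hx one_pos) one_pos
      have hseg : ∀ r s : ℝ, 0 < r → r < s → s ≤ 1 →
          ((∫ t in Set.Ioc (0:ℝ) s, W (x*t)) - ∫ t in Set.Ioc (0:ℝ) r, W (x*t)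
            = ∫ t in Set.Ioc r s, W (x*t)) ∧
          W (x*r) * (s - r) ≤ (∫ t in Set.Ioc r s, W (x*t)) ∧
          (∫ t in Set.Ioc r s, W (x*t)) ≤ W (x*s) * (s - r) := by
        intro r s hr hrs hs1
        have hIs : IntegrableOn (fun t => W (x*t)) (Set.Ioc 0 s) :=
          hloc1.mono_set (Set.Ioc_subset_Ioc le_rfl hs1)
        have hIrs : IntegrableOn (fun t => W (x*t)) (Set.Ioc r s) :=
          hIs.mono_set (Set.Ioc_subset_Ioc hr.le le_rfl)
        have hIr : IntegrableOn (fun t => W (x*t)) (Set.Ioc 0 r) :=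
          hIs.mono_set (Set.Ioc_subset_Ioc le_rfl hrs.le)
        refine ⟨?_, ?_, ?_⟩
        · rw [← Set.Ioc_union_Ioc_eq_Ioc hr.le hrs.le,
            setIntegral_union (Set.Ioc_disjoint_Ioc_of_le le_rfl) measurableSet_Ioc hIr hIrs]
          ring
        · have hmono : ∀ t ∈ Set.Ioc r s, W (x*r) ≤ W (x*t) := fun t ht =>
            hWmono (mul_nonneg hx.le hr.le) (mul_nonneg hx.le (hr.trans ht.1).le)
              (mul_le_mul_of_nonneg_left ht.1.le hx.le)
          calc W (x*r) * (s - r)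
              = ∫ _ in Set.Ioc r s, W (x*r) := by
                rw [setIntegral_const, Real.volume_real_Ioc, smul_eq_mul,
                  max_eq_left (by linarith), mul_comm]
            _ ≤ ∫ t in Set.Ioc r s, W (x*t) :=
                setIntegral_mono_on
                  (integrableOn_const measure_Ioc_lt_top.ne) hIrs
                  measurableSet_Ioc hmono
        · have hmono : ∀ t ∈ Set.Ioc r s, W (x*t) ≤ W (x*s) := fun t ht =>
            hWmono (mul_nonneg hx.le (hr.trans ht.1).le)
              (mul_nonneg hx.le (hr.trans hrs).le)
              (mul_le_mul_of_nonneg_left ht.2 hx.le)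
          calc (∫ t in Set.Ioc r s, W (x*t))
              ≤ ∫ _ in Set.Ioc r s, W (x*s) :=
                setIntegral_mono_on hIrs
                  (integrableOn_const measure_Ioc_lt_top.ne)
                  measurableSet_Ioc hmono
            _ = W (x*s) * (s - r) := by
                rw [setIntegral_const, Real.volume_real_Ioc, smul_eq_mul,
                  max_eq_left (by linarith), mul_comm]
      obtain ⟨heq1, hlow1, _⟩ := hseg β γ hβ0 hβγ hγ1.le
      obtain ⟨heq2, hlow2, hup2⟩ := hseg γ 1 hγ0 hγ1 le_rfl
      have hWβx : W (β * x) * (γ - β) ≤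
          (∫ t in Set.Ioc (0:ℝ) γ, W (x*t)) - ∫ t in Set.Ioc (0:ℝ) β, W (x*t) := by
        rw [heq1, show β * x = x * β from mul_comm β x]
        exact hlow1
      have hden_lb : W (x*γ) * (1 - γ) ≤
          (∫ t in Set.Ioc (0:ℝ) 1, W (x*t)) - ∫ t in Set.Ioc (0:ℝ) γ, W (x*t) := by
        rw [heq2]; exact hlow2
      have hden_ub : (∫ t in Set.Ioc (0:ℝ) 1, W (x*t)) - ∫ t in Set.Ioc (0:ℝ) γ, W (x*t)
          ≤ W x * (1 - γ) := by
        rw [heq2]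
        have h := hup2
        rwa [mul_one] at h
      set num := (∫ t in Set.Ioc (0:ℝ) γ, W (x*t)) - ∫ t in Set.Ioc (0:ℝ) β, W (x*t)
        with hnumdef
      set den := (∫ t in Set.Ioc (0:ℝ) 1, W (x*t)) - ∫ t in Set.Ioc (0:ℝ) γ, W (x*t)
        with hdendef
      have hdenpos : 0 < den :=
        lt_of_lt_of_le (mul_pos (hWpos _ (mul_pos hx hγ0)) h1γ0) hden_lb
      have hnum0 : 0 ≤ num :=
        le_trans (mul_nonneg (hWnonneg _ (mul_pos hβ0 hx).le) hγβ0.le) hWβx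
      have h1 : W (β * x) ≤ num / (γ - β) := (le_div_iff₀ hγβ0).mpr hWβx
      have h2 : den / (1 - γ) ≤ W x := (div_le_iff₀ h1γ0).mpr hden_ub
      have h3 : 0 < den / (1 - γ) := div_pos hdenpos h1γ0
      have h4 : W (β * x) / W x ≤ (num / (γ - β)) / (den / (1 - γ)) :=
        div_le_div₀ (div_nonneg hnum0 hγβ0.le) h1 h3 h2
      have h5 : (num / (γ - β)) / (den / (1 - γ))
          = ((1 - γ) / (γ - β)) * (num / den) := by
        field_simp
      rw [h5] at h4
      exact h4
    -- conclude
    have hRr : R < (R + 1) / 2 := by linarith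
    have hr1 : (R + 1) / 2 < 1 := by linarith
    have hfin : ∀ᶠ x in 𝓝[>] (0:ℝ), W (β * x) / W x ≤ (R + 1) / 2 := by
      filter_upwards [hptw, hgR.eventually (eventually_lt_nhds hRr)] with x h1 h2
      exact h1.trans h2.le
    exact lt_of_le_of_lt (limsup_le_of_le hcb hfin) hr1
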